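/- Let f be adaptive monotone and adaptive submodular, π any deterministic adaptive policy, and π* any deterministic policy selecting at most r items. Then for any 0 ≤ i ≤ r, f_avg(π*) − f_avg(π_i) ≤ r · E_Φ[max_e Δ(e | Ψ_i(π, Φ))]. -/
import Mathlib


open Finset
open scoped Classical

section Adaptive

variable {E O : Type*} [Fintype E] [Fintype O] [DecidableEq E] [Nonempty E]

/-- A partial realization: a partial assignment of states to items. -/
abbrev PReal (E O : Type*) := E → Option O

/-- A (full) realization `φ` is consistent with a partial realization `ψ`
(written `φ ∼ ψ`) if `φ` agrees with `ψ` on the domain of `ψ`. -/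
def consistentR (φ : E → O) (ψ : PReal E O) : Prop := ∀ e o, ψ e = some o → φ e = o

/-- The domain of a partial realization, i.e. the set of items already selected. -/
noncomputable def pdom (ψ : PReal E O) : Finset E :=
  Finset.univ.filter fun e => (ψ e).isSome

/-- The probability `Pr[Φ ∼ ψ]` that the random realization is consistent with `ψ`. -/
noncomputable def prMass (p : (E → O) → ℝ) (ψ : PReal E O) : ℝ :=
  ∑ φ ∈ Finset.univ.filter (fun φ => consistentR φ ψ), p φ

/-- The conditional expected marginal benefit `Δ(e | ψ)` of item `e` given the
partial realization `ψ`. -/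
noncomputable def marginal (p : (E → O) → ℝ) (f : Finset E → (E → O) → ℝ)
    (e : E) (ψ : PReal E O) : ℝ :=
  (∑ φ ∈ Finset.univ.filter (fun φ => consistentR φ ψ),
      p φ * (f (insert e (pdom ψ)) φ - f (pdom ψ) φ)) / prMass p ψ

/-- `max_e Δ(e | ψ)`, the best single-item conditional marginal benefit. -/
noncomputable def maxMarginal (p : (E → O) → ℝ) (f : Finset E → (E → O) → ℝ)
    (ψ : PReal E O) : ℝ :=
  Finset.univ.sup' Finset.univ_nonempty (fun e => marginal p f e ψ)

/-- Adaptive monotonicity: `Δ(e | ψ) ≥ 0` for every `e` and every `ψ` with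
`Pr[Φ ∼ ψ] > 0`. -/
def AdaptiveMonotone (p : (E → O) → ℝ) (f : Finset E → (E → O) → ℝ) : Prop :=
  ∀ ψ : PReal E O, 0 < prMass p ψ → ∀ e : E, 0 ≤ marginal p f e ψ

/-- `ψ` is a subrealization of `ψ'`. -/
def subreal (ψ ψ' : PReal E O) : Prop := ∀ e o, ψ e = some o → ψ' e = some o

/-- Adaptive submodularity: `Δ(e | ψ) ≥ Δ(e | ψ')` whenever `ψ ⊆ ψ'` and
`e ∉ dom(ψ')`. -/
def AdaptiveSubmodular (p : (E → O) → ℝ) (f : Finset E → (E → O) → ℝ) : Prop :=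
  ∀ ψ ψ' : PReal E O, subreal ψ ψ' → ∀ e ∉ pdom ψ', marginal p f e ψ' ≤ marginal p f e ψ

/-- A deterministic adaptive policy: picks the next item from the current
partial realization. -/
abbrev Policy (E O : Type*) := PReal E O → E

/-- `runP π φ i = Ψ_i(π, φ)`: the partial realization observed after policy `π`
selects its first `i` items under realization `φ`. -/
noncomputable def runP (π : Policy E O) (φ : E → O) : ℕ → PReal E O
  | 0 => fun _ => none
  | (i + 1) =>
      Function.update (runP π φ i) (π (runP π φ i)) (some (φ (π (runP π φ i))))

/-- `favg p f π i = f_avg(π_i)`: the expected utility of the truncated policy `π_i`. -/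
noncomputable def favg (p : (E → O) → ℝ) (f : Finset E → (E → O) → ℝ)
    (π : Policy E O) (i : ℕ) : ℝ :=
  ∑ φ : E → O, p φ * f (pdom (runP π φ i)) φ

end Adaptive

section Aux
set_option linter.unusedSectionVars false
set_option linter.unusedVariables false

variable {E O : Type*} [Fintype E] [Fintype O] [DecidableEq E] [Nonempty E]

lemma mem_pdom {ψ : PReal E O} {e : E} : e ∈ pdom ψ ↔ (ψ e).isSome := by
  simp [pdom]

lemma pdom_update (ψ : PReal E O) (a : E) (v : O) :
    pdom (Function.update ψ a (some v)) = insert a (pdom ψ) := by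
  ext e
  simp only [mem_pdom, Finset.mem_insert, Function.update_apply]
  by_cases h : e = a <;> simp [h]

lemma prMass_nonneg (p : (E → O) → ℝ) (hp : ∀ φ, 0 ≤ p φ) (ψ : PReal E O) :
    0 ≤ prMass p ψ := Finset.sum_nonneg fun φ _ => hp φ

lemma marginal_nonneg (p : (E → O) → ℝ) (hp : ∀ φ, 0 ≤ p φ)
    (f : Finset E → (E → O) → ℝ) (hmono : AdaptiveMonotone p f) (e : E) (ψ : PReal E O) :
    0 ≤ marginal p f e ψ := by
  rcases eq_or_lt_of_le (prMass_nonneg p hp ψ) with h | h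
  · rw [marginal, ← h, div_zero]
  · exact hmono ψ h e

noncomputable def merge (ψ₁ ψ₂ : PReal E O) : PReal E O := fun e =>
  match ψ₁ e with
  | some o => some o
  | none => ψ₂ e

lemma merge_apply_none {ψ₁ ψ₂ : PReal E O} {e : E} (h : ψ₁ e = none) :
    merge ψ₁ ψ₂ e = ψ₂ e := by
  unfold merge; rw [h]

lemma merge_apply_some {ψ₁ ψ₂ : PReal E O} {e : E} {o : O} (h : ψ₁ e = some o) :
    merge ψ₁ ψ₂ e = some o := by
  unfold merge; rw [h]

lemma merge_none_right (ψ : PReal E O) : merge ψ (fun _ => none) = ψ := by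
  funext e
  cases h : ψ e with
  | none => rw [merge_apply_none h]
  | some o => rw [merge_apply_some h]

lemma pdom_merge (ψ₁ ψ₂ : PReal E O) : pdom (merge ψ₁ ψ₂) = pdom ψ₁ ∪ pdom ψ₂ := by
  ext e
  simp only [mem_pdom, Finset.mem_union]
  cases h : ψ₁ e with
  | none => rw [merge_apply_none h]; simp [h]
  | some o => rw [merge_apply_some h]; simp [h]

lemma subreal_merge_left (ψ₁ ψ₂ : PReal E O) : subreal ψ₁ (merge ψ₁ ψ₂) :=
  fun _ o h => merge_apply_some h

lemma consistent_merge {φ : E → O} {ψ₁ ψ₂ : PReal E O}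
    (h₁ : consistentR φ ψ₁) (h₂ : consistentR φ ψ₂) :
    consistentR φ (merge ψ₁ ψ₂) := by
  intro e o h
  cases hc : ψ₁ e with
  | some o' =>
    rw [merge_apply_some hc] at h
    cases h
    exact h₁ e o hc
  | none =>
    rw [merge_apply_none hc] at h
    exact h₂ e o h

lemma consistent_of_merge {φ₀ φ : E → O} {ψ₁ ψ₂ : PReal E O}
    (h₁ : consistentR φ₀ ψ₁) (h₂ : consistentR φ₀ ψ₂)
    (h : consistentR φ (merge ψ₁ ψ₂)) :
    consistentR φ ψ₁ ∧ consistentR φ ψ₂ := by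
  constructor
  · intro e o he
    exact h e o (merge_apply_some he)
  · intro e o he
    cases hc : ψ₁ e with
    | none => exact h e o ((merge_apply_none hc).trans he)
    | some o' =>
      have : o' = o := by rw [← h₁ e o' hc, h₂ e o he]
      subst this
      exact h e o' (merge_apply_some hc)

lemma consistent_runP (π : Policy E O) (φ : E → O) (k : ℕ) :
    consistentR φ (runP π φ k) := by
  induction k with
  | zero => intro e o h; simp [runP] at h
  | succ k ih =>
    intro e o h
    rw [runP, Function.update_apply] at h
    split_ifs at h with hea
    · cases h; rw [hea]
    · exact ih e o h

lemma runP_eq_of_consistent (π : Policy E O) (φ φ' : E → O) (k : ℕ)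
    (h : consistentR φ' (runP π φ k)) : runP π φ' k = runP π φ k := by
  induction k with
  | zero => rfl
  | succ k ih =>
    have hsub : consistentR φ' (runP π φ k) := by
      intro e o he
      apply h e o
      rw [runP, Function.update_apply]
      split_ifs with hea
      · rw [← (consistent_runP π φ k e o he), hea]
      · exact he
    have hk := ih hsub
    have hφe : φ' (π (runP π φ k)) = φ (π (runP π φ k)) := by
      apply h
      rw [runP, Function.update_self]
    rw [runP, hk, hφe, runP]


lemma core_sum_marginal (p : (E → O) → ℝ) (hp : ∀ φ, 0 ≤ p φ)
    (f : Finset E → (E → O) → ℝ)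
    (Ψ : (E → O) → PReal E O) (eSel : (E → O) → E)
    (ha : ∀ φ, consistentR φ (Ψ φ))
    (hb : ∀ φ φ', consistentR φ' (Ψ φ) → Ψ φ' = Ψ φ)
    (hc : ∀ φ φ', consistentR φ' (Ψ φ) → eSel φ' = eSel φ) :
    ∑ φ : E → O, p φ * (f (insert (eSel φ) (pdom (Ψ φ))) φ - f (pdom (Ψ φ)) φ)
      = ∑ φ : E → O, p φ * marginal p f (eSel φ) (Ψ φ) := by
  have hmaps : ∀ x ∈ (Finset.univ : Finset (E → O)), Ψ x ∈ Finset.univ.image Ψ :=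
    fun x _ => Finset.mem_image_of_mem Ψ (Finset.mem_univ x)
  rw [← Finset.sum_fiberwise_of_maps_to hmaps
        (fun φ => p φ * (f (insert (eSel φ) (pdom (Ψ φ))) φ - f (pdom (Ψ φ)) φ)),
      ← Finset.sum_fiberwise_of_maps_to hmaps
        (fun φ => p φ * marginal p f (eSel φ) (Ψ φ))]
  apply Finset.sum_congr rfl
  intro ψ hψ
  obtain ⟨φ₀, -, hφ₀⟩ := Finset.mem_image.mp hψ
  have hfib : Finset.univ.filter (fun φ => Ψ φ = ψ)
      = Finset.univ.filter (fun φ => consistentR φ ψ) := by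
    ext φ
    simp only [Finset.mem_filter, Finset.mem_univ, true_and]
    constructor
    · rintro rfl; exact ha φ
    · intro h
      rw [← hφ₀] at h ⊢
      exact hb φ₀ φ h
  have hE : ∀ φ ∈ Finset.univ.filter (fun φ => consistentR φ ψ),
      eSel φ = eSel φ₀ ∧ Ψ φ = ψ := by
    intro φ hφ
    rw [Finset.mem_filter] at hφ
    have h := hφ.2
    rw [← hφ₀] at h
    exact ⟨hc φ₀ φ h, by rw [← hφ₀]; exact hb φ₀ φ h⟩
  rw [hfib]
  set s := Finset.univ.filter (fun φ => consistentR φ ψ) with hs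
  have hL : ∑ φ ∈ s, p φ * (f (insert (eSel φ) (pdom (Ψ φ))) φ - f (pdom (Ψ φ)) φ)
      = ∑ φ ∈ s, p φ * (f (insert (eSel φ₀) (pdom ψ)) φ - f (pdom ψ) φ) := by
    refine Finset.sum_congr rfl fun φ hφ => ?_
    obtain ⟨h1, h2⟩ := hE φ hφ
    rw [h1, h2]
  have hR : ∑ φ ∈ s, p φ * marginal p f (eSel φ) (Ψ φ)
      = (∑ φ ∈ s, p φ) * marginal p f (eSel φ₀) ψ := by
    rw [Finset.sum_mul]
    refine Finset.sum_congr rfl fun φ hφ => ?_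
    obtain ⟨h1, h2⟩ := hE φ hφ
    rw [h1, h2]
  rw [hL, hR]
  have hpm : (∑ φ ∈ s, p φ) = prMass p ψ := rfl
  by_cases hm : prMass p ψ = 0
  · have hz : ∀ φ ∈ s, p φ = 0 := by
      intro φ hφ
      have := (Finset.sum_eq_zero_iff_of_nonneg (fun φ' _ => hp φ')).mp (hpm.trans hm)
      exact this φ hφ
    rw [Finset.sum_eq_zero (fun φ hφ => by rw [hz φ hφ, zero_mul]), hpm, hm, zero_mul]
  · rw [hpm, marginal, mul_div_cancel₀ _ hm]


lemma step_mono (p : (E → O) → ℝ) (hp : ∀ φ, 0 ≤ p φ)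
    (f : Finset E → (E → O) → ℝ) (hmono : AdaptiveMonotone p f)
    (Ψ : (E → O) → PReal E O) (eSel : (E → O) → E)
    (ha : ∀ φ, consistentR φ (Ψ φ))
    (hb : ∀ φ φ', consistentR φ' (Ψ φ) → Ψ φ' = Ψ φ)
    (hc : ∀ φ φ', consistentR φ' (Ψ φ) → eSel φ' = eSel φ) :
    ∑ φ : E → O, p φ * f (pdom (Ψ φ)) φ
      ≤ ∑ φ : E → O, p φ * f (insert (eSel φ) (pdom (Ψ φ))) φ := by
  have h := core_sum_marginal p hp f Ψ eSel ha hb hc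
  have h2 : 0 ≤ ∑ φ : E → O, p φ * marginal p f (eSel φ) (Ψ φ) :=
    Finset.sum_nonneg fun φ _ => mul_nonneg (hp φ) (marginal_nonneg p hp f hmono _ _)
  rw [← h] at h2
  simp only [mul_sub, Finset.sum_sub_distrib] at h2
  linarith

lemma step_bound (p : (E → O) → ℝ) (hp : ∀ φ, 0 ≤ p φ)
    (f : Finset E → (E → O) → ℝ) (hmono : AdaptiveMonotone p f)
    (hsub : AdaptiveSubmodular p f)
    (Ψ ρ : (E → O) → PReal E O) (eSel : (E → O) → E)
    (ha : ∀ φ, consistentR φ (Ψ φ))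
    (hb : ∀ φ φ', consistentR φ' (Ψ φ) → Ψ φ' = Ψ φ)
    (hc : ∀ φ φ', consistentR φ' (Ψ φ) → eSel φ' = eSel φ)
    (hρc : ∀ φ, consistentR φ (ρ φ))
    (hρ : ∀ φ, subreal (ρ φ) (Ψ φ)) :
    ∑ φ : E → O, p φ * f (insert (eSel φ) (pdom (Ψ φ))) φ
      ≤ (∑ φ : E → O, p φ * f (pdom (Ψ φ)) φ)
        + ∑ φ : E → O, p φ * maxMarginal p f (ρ φ) := by
  have h := core_sum_marginal p hp f Ψ eSel ha hb hc
  have h2 : ∑ φ : E → O, p φ * marginal p f (eSel φ) (Ψ φ)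
      ≤ ∑ φ : E → O, p φ * maxMarginal p f (ρ φ) := by
    refine Finset.sum_le_sum fun φ _ => ?_
    rcases eq_or_lt_of_le (hp φ) with h0 | h0
    · rw [← h0, zero_mul, zero_mul]
    · refine mul_le_mul_of_nonneg_left ?_ (hp φ)
      have hmem : ∀ ψ : PReal E O, consistentR φ ψ → p φ ≤ prMass p ψ := by
        intro ψ hcons
        exact Finset.single_le_sum (f := p) (fun φ' _ => hp φ')
          (by simp only [Finset.mem_filter, Finset.mem_univ, true_and]; exact hcons)
      have hpmρ : 0 < prMass p (ρ φ) := lt_of_lt_of_le h0 (hmem _ (hρc φ))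
      by_cases he : eSel φ ∈ pdom (Ψ φ)
      · have hz : marginal p f (eSel φ) (Ψ φ) = 0 := by
          rw [marginal, Finset.insert_eq_self.mpr he]
          simp
        rw [hz]
        obtain e₀ := Classical.arbitrary E
        calc (0:ℝ) ≤ marginal p f e₀ (ρ φ) := hmono _ hpmρ e₀
          _ ≤ maxMarginal p f (ρ φ) :=
              Finset.le_sup' (fun e => marginal p f e (ρ φ)) (Finset.mem_univ e₀)
      · calc marginal p f (eSel φ) (Ψ φ) ≤ marginal p f (eSel φ) (ρ φ) :=
              hsub _ _ (hρ φ) _ he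
          _ ≤ maxMarginal p f (ρ φ) :=
              Finset.le_sup' (fun e => marginal p f e (ρ φ)) (Finset.mem_univ _)
  have h3 := h.trans_le h2
  simp only [mul_sub, Finset.sum_sub_distrib] at h3
  linarith


lemma consistent_merge_runP (π₁ π₂ : Policy E O) (φ : E → O) (k₁ k₂ : ℕ) :
    consistentR φ (merge (runP π₁ φ k₁) (runP π₂ φ k₂)) :=
  consistent_merge (consistent_runP π₁ φ k₁) (consistent_runP π₂ φ k₂)

lemma runs_eq_of_consistent_merge {π₁ π₂ : Policy E O} {φ φ' : E → O} {k₁ k₂ : ℕ}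
    (h : consistentR φ' (merge (runP π₁ φ k₁) (runP π₂ φ k₂))) :
    runP π₁ φ' k₁ = runP π₁ φ k₁ ∧ runP π₂ φ' k₂ = runP π₂ φ k₂ := by
  obtain ⟨h₁, h₂⟩ :=
    consistent_of_merge (consistent_runP π₁ φ k₁) (consistent_runP π₂ φ k₂) h
  exact ⟨runP_eq_of_consistent _ _ _ _ h₁, runP_eq_of_consistent _ _ _ _ h₂⟩

lemma runP_zero (π : Policy E O) (φ : E → O) : runP π φ 0 = fun _ => none := rfl

end Aux


/-- (Lemma 3) For an adaptive monotone, adaptive submodular `f`, any deterministic adaptive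
policy `π`, any deterministic policy `π*` selecting at most `r` items, and `0 ≤ i ≤ r`:
`f_avg(π*) − f_avg(π_i) ≤ r · E_Φ[max_e Δ(e | Ψ_i(π, Φ))]`. -/
theorem opt_minus_favg_le {E O : Type*} [Fintype E] [Fintype O] [DecidableEq E]
    [Nonempty E] (p : (E → O) → ℝ) (hp : ∀ φ, 0 ≤ p φ) (hp1 : ∑ φ : E → O, p φ = 1)
    (f : Finset E → (E → O) → ℝ) (hf : ∀ S φ, 0 ≤ f S φ)
    (hmono : AdaptiveMonotone p f) (hsub : AdaptiveSubmodular p f)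
    (π πstar : Policy E O) (r i : ℕ) (hi : i ≤ r) :
    favg p f πstar r - favg p f π i ≤
      (r : ℝ) * ∑ φ : E → O, p φ * maxMarginal p f (runP π φ i) := by
  set B := ∑ φ : E → O, p φ * maxMarginal p f (runP π φ i) with hB
  -- Step A: monotone chain, favg πstar r ≤ expected value of the union
  have key1 : ∀ k : ℕ,
      (∑ φ : E → O, p φ * f (pdom (merge (runP πstar φ r) (runP π φ 0))) φ)
        ≤ ∑ φ : E → O, p φ * f (pdom (merge (runP πstar φ r) (runP π φ k))) φ := by
    intro k
    induction k with
    | zero => exact le_refl _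
    | succ k ih =>
      refine ih.trans ?_
      have hstep := step_mono p hp f hmono
        (fun φ => merge (runP πstar φ r) (runP π φ k))
        (fun φ => π (runP π φ k))
        (fun φ => consistent_merge_runP πstar π φ r k)
        (fun φ φ' h => by
          obtain ⟨h1, h2⟩ := runs_eq_of_consistent_merge h
          simp only [h1, h2])
        (fun φ φ' h => congrArg π (runs_eq_of_consistent_merge h).2)
      refine hstep.trans_eq ?_
      refine Finset.sum_congr rfl fun φ _ => ?_
      congr 1
      rw [pdom_merge, pdom_merge, runP, pdom_update, Finset.union_insert]
  -- Step B: submodularity chain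
  have key2 : ∀ j : ℕ,
      (∑ φ : E → O, p φ * f (pdom (merge (runP π φ i) (runP πstar φ j))) φ)
        ≤ (∑ φ : E → O, p φ * f (pdom (merge (runP π φ i) (runP πstar φ 0))) φ)
          + (j : ℝ) * B := by
    intro j
    induction j with
    | zero => simp
    | succ j ih =>
      have hstep := step_bound p hp f hmono hsub
        (fun φ => merge (runP π φ i) (runP πstar φ j))
        (fun φ => runP π φ i)
        (fun φ => πstar (runP πstar φ j))
        (fun φ => consistent_merge_runP π πstar φ i j)
        (fun φ φ' h => by
          obtain ⟨h1, h2⟩ := runs_eq_of_consistent_merge h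
          simp only [h1, h2])
        (fun φ φ' h => congrArg πstar (runs_eq_of_consistent_merge h).2)
        (fun φ => consistent_runP π φ i)
        (fun φ => subreal_merge_left _ _)
      have heq : (∑ φ : E → O, p φ * f (pdom (merge (runP π φ i) (runP πstar φ (j+1)))) φ)
          = ∑ φ : E → O, p φ * f (insert (πstar (runP πstar φ j))
              (pdom (merge (runP π φ i) (runP πstar φ j)))) φ := by
        refine Finset.sum_congr rfl fun φ _ => ?_
        congr 1
        rw [pdom_merge, pdom_merge, runP, pdom_update, Finset.union_insert]
      rw [heq]
      refine hstep.trans ?_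
      push_cast
      linarith
  -- identifications
  have hstar : favg p f πstar r
      = ∑ φ : E → O, p φ * f (pdom (merge (runP πstar φ r) (runP π φ 0))) φ := by
    refine Finset.sum_congr rfl fun φ _ => ?_
    rw [runP_zero, merge_none_right]
  have hswap : (∑ φ : E → O, p φ * f (pdom (merge (runP πstar φ r) (runP π φ i))) φ)
      = ∑ φ : E → O, p φ * f (pdom (merge (runP π φ i) (runP πstar φ r))) φ := by
    refine Finset.sum_congr rfl fun φ _ => ?_
    congr 1
    rw [pdom_merge, pdom_merge, Finset.union_comm]
  have hπi : (∑ φ : E → O, p φ * f (pdom (merge (runP π φ i) (runP πstar φ 0))) φ)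
      = favg p f π i := by
    refine Finset.sum_congr rfl fun φ _ => ?_
    rw [runP_zero, merge_none_right]
  have h1 := key1 i
  have h2 := key2 r
  rw [hstar]
  rw [hswap] at h1
  rw [hπi] at h2
  linarith
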